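/- Let X ∈ ℝ^n with |x_j| ≤ M for all j, and let k ≥ 1 be real. If Z ∈ ℝ^n satisfies ‖X − W⁻¹(Z)‖_k ≤ ‖X‖_k (in particular, if Z minimizes ‖X − W⁻¹(Z)‖_k over all vectors with at most B nonzero entries, for any B), then max_i |Z_i| ≤ 2·n^{1/k}·M. -/

import Mathlib

/-- The non-normalized Haar basis vector `V_i` on `n = 2^m` coordinates:
`V_0 ≡ 1`, and for `i = 2^s + t` (`0 ≤ s < m`, `0 ≤ t < 2^s`), `V_i` is `+1` on the
left half of the dyadic block `I(s,t) = [t·2^(m-s), (t+1)·2^(m-s))`, `-1` on its right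
half, and `0` outside. -/
noncomputable def haarV (m i j : ℕ) : ℝ :=
  if i = 0 then 1
  else
    let s := Nat.log2 i
    let t := i - 2 ^ s
    if t * 2 ^ (m - s) ≤ j ∧ j < t * 2 ^ (m - s) + 2 ^ (m - s - 1) then 1
    else if t * 2 ^ (m - s) + 2 ^ (m - s - 1) ≤ j ∧ j < (t + 1) * 2 ^ (m - s) then -1
    else 0

/-- The inverse wavelet transform `W⁻¹(Z) = ∑_{i<2^m} Z_i · V_i`. -/
noncomputable def invW (m : ℕ) (Z : ℕ → ℝ) (j : ℕ) : ℝ :=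
  ∑ i ∈ Finset.range (2 ^ m), Z i * haarV m i j

/-- The `ℓ_k` norm `‖Y‖_k = (∑_{j<n} |Y_j|^k)^(1/k)` of a vector `Y ∈ ℝ^n`. -/
noncomputable def lpNormK (n : ℕ) (k : ℝ) (Y : ℕ → ℝ) : ℝ :=
  (∑ j ∈ Finset.range n, |Y j| ^ k) ^ (1 / k)

lemma haarV_lower (m i j : ℕ) (hi : i < 2 ^ m) :
    haarV (m + 1) i (2 * j) = haarV m i j ∧ haarV (m + 1) i (2 * j + 1) = haarV m i j := by
  unfold haarV
  by_cases h0 : i = 0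
  · simp [h0]
  · simp only [h0, if_false]
    have hs : Nat.log2 i < m := (Nat.log2_lt h0).mpr hi
    set s := Nat.log2 i with hsdef
    set t := i - 2 ^ s with htdef
    have h1 : m + 1 - s = (m - s - 1) + 2 := by omega
    have h2 : m - s = (m - s - 1) + 1 := by omega
    have h3 : m + 1 - s - 1 = (m - s - 1) + 1 := by omega
    have h4 : m + 1 - s - 1 = m - s - 1 + 2 - 1 := by omega
    rw [h1]
    have h5 : m - s - 1 + 2 - 1 = (m - s - 1) + 1 := by omega
    rw [h5]
    set P := 2 ^ (m - s - 1) with hP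
    have hPpos : 0 < P := Nat.pow_pos (by norm_num)
    have e1 : (2:ℕ) ^ ((m - s - 1) + 2) = P * 4 := by rw [hP, pow_succ, pow_succ]; ring
    have e2 : (2:ℕ) ^ ((m - s - 1) + 1) = P * 2 := by rw [hP, pow_succ]
    rw [e1, e2, h2, e2]
    have q1 : t * (P * 4) = 4 * (t * P) := by ring
    have q2 : t * (P * 2) = 2 * (t * P) := by ring
    have q3 : (t + 1) * (P * 2) = 2 * (t * P) + 2 * P := by ring
    have q4 : (t + 1) * (P * 4) = 4 * (t * P) + 4 * P := by ring
    rw [q1, q2, q3, q4]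
    constructor
    · split_ifs <;> first | rfl | omega
    · split_ifs <;> first | rfl | omega

lemma haarV_upper (m t j : ℕ) (ht : t < 2 ^ m) :
    haarV (m + 1) (2 ^ m + t) (2 * j) = (if j = t then 1 else 0) ∧
    haarV (m + 1) (2 ^ m + t) (2 * j + 1) = (if j = t then -1 else 0) := by
  have hne : 2 ^ m + t ≠ 0 := by positivity
  have hs : Nat.log2 (2 ^ m + t) = m := by
    have h1 : m ≤ Nat.log2 (2 ^ m + t) := (Nat.le_log2 hne).mpr (by omega)
    have h2 : Nat.log2 (2 ^ m + t) < m + 1 := (Nat.log2_lt hne).mpr (by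
      have : 2 ^ (m+1) = 2 ^ m * 2 := pow_succ 2 m
      omega)
    omega
  unfold haarV
  simp only [hne, if_false, hs]
  have h1 : m + 1 - m = 1 := by omega
  have h2 : m + 1 - m - 1 = 0 := by omega
  have h3 : 2 ^ m + t - 2 ^ m = t := by omega
  rw [h1, h3]
  norm_num
  constructor
  · split_ifs <;> first | rfl | omega
  · split_ifs <;> first | rfl | omega

lemma invW_split (m : ℕ) (Z : ℕ → ℝ) (j : ℕ) :
    invW (m + 1) Z j = (∑ i ∈ Finset.range (2 ^ m), Z i * haarV (m+1) i j)
      + ∑ i ∈ Finset.range (2 ^ m), Z (2 ^ m + i) * haarV (m+1) (2 ^ m + i) j := by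
  unfold invW
  have h : (2:ℕ) ^ (m+1) = 2 ^ m + 2 ^ m := by rw [pow_succ]; ring
  rw [h, Finset.sum_range_add]

lemma invW_coeff_bound (m : ℕ) (Z : ℕ → ℝ) (C : ℝ)
    (h : ∀ j < 2 ^ m, |invW m Z j| ≤ C) : ∀ i < 2 ^ m, |Z i| ≤ C := by
  induction m generalizing Z with
  | zero =>
    intro i hi
    interval_cases i
    have := h 0 (by norm_num)
    simpa [invW, haarV] using this
  | succ m ih =>
    have key : ∀ j < 2 ^ m,
        invW (m+1) Z (2*j) = invW m Z j + Z (2 ^ m + j) ∧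
        invW (m+1) Z (2*j+1) = invW m Z j - Z (2 ^ m + j) := by
      intro j hj
      rw [invW_split, invW_split]
      have hlow : ∀ r ∈ Finset.range (2 ^ m),
          Z r * haarV (m+1) r (2*j) = Z r * haarV m r j := by
        intro r hr
        rw [(haarV_lower m r j (Finset.mem_range.mp hr)).1]
      have hlow' : ∀ r ∈ Finset.range (2 ^ m),
          Z r * haarV (m+1) r (2*j+1) = Z r * haarV m r j := by
        intro r hr
        rw [(haarV_lower m r j (Finset.mem_range.mp hr)).2]
      have hup : ∀ r ∈ Finset.range (2 ^ m),
          Z (2^m + r) * haarV (m+1) (2^m + r) (2*j) = if j = r then Z (2^m + r) else 0 := by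
        intro r hr
        rw [(haarV_upper m r j (Finset.mem_range.mp hr)).1]
        split_ifs <;> simp
      have hup' : ∀ r ∈ Finset.range (2 ^ m),
          Z (2^m + r) * haarV (m+1) (2^m + r) (2*j+1) = if j = r then -Z (2^m + r) else 0 := by
        intro r hr
        rw [(haarV_upper m r j (Finset.mem_range.mp hr)).2]
        split_ifs <;> simp
      rw [Finset.sum_congr rfl hlow, Finset.sum_congr rfl hup,
          Finset.sum_congr rfl hlow', Finset.sum_congr rfl hup',
          Finset.sum_ite_eq (Finset.range (2^m)) j (fun r => Z (2^m + r)),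
          Finset.sum_ite_eq (Finset.range (2^m)) j (fun r => -Z (2^m + r)),
          if_pos (Finset.mem_range.mpr hj), if_pos (Finset.mem_range.mpr hj)]
      exact ⟨by rw [invW], by rw [invW]; ring⟩
    intro i hi
    have hbnd : ∀ j < 2 ^ m, |invW m Z j| ≤ C ∧ |Z (2 ^ m + j)| ≤ C := by
      intro j hj
      have hpow : 2 ^ (m+1) = 2 ^ m + 2 ^ m := by rw [pow_succ]; ring
      have h1 := h (2*j) (by omega)
      have h2 := h (2*j+1) (by omega)
      obtain ⟨e1, e2⟩ := key j hj
      rw [e1] at h1; rw [e2] at h2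
      constructor
      · have : invW m Z j = ((invW m Z j + Z (2^m+j)) + (invW m Z j - Z (2^m+j)))/2 := by ring
        rw [this]
        calc |((invW m Z j + Z (2^m+j)) + (invW m Z j - Z (2^m+j)))/2|
            ≤ (|invW m Z j + Z (2^m+j)| + |invW m Z j - Z (2^m+j)|)/2 := by
              rw [abs_div]
              apply div_le_div_of_nonneg_right (abs_add_le _ _) (by norm_num) |>.trans_eq
              norm_num
          _ ≤ (C + C)/2 := by linarith
          _ = C := by ring
      · have : Z (2^m+j) = ((invW m Z j + Z (2^m+j)) - (invW m Z j - Z (2^m+j)))/2 := by ring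
        rw [this]
        calc |((invW m Z j + Z (2^m+j)) - (invW m Z j - Z (2^m+j)))/2|
            ≤ (|invW m Z j + Z (2^m+j)| + |invW m Z j - Z (2^m+j)|)/2 := by
              rw [abs_div]
              apply div_le_div_of_nonneg_right (abs_sub _ _) (by norm_num) |>.trans_eq
              norm_num
          _ ≤ (C + C)/2 := by linarith
          _ = C := by ring
    by_cases hlo : i < 2 ^ m
    · exact ih Z (fun j hj => (hbnd j hj).1) i hlo
    · have hpow : 2 ^ (m+1) = 2 ^ m + 2 ^ m := by rw [pow_succ]; ring
      have : i = 2 ^ m + (i - 2 ^ m) := by omega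
      rw [this]
      exact (hbnd (i - 2^m) (by omega)).2

lemma coord_le_lpNormK (n : ℕ) (k : ℝ) (hk : 1 ≤ k) (Y : ℕ → ℝ) (j : ℕ) (hj : j < n) :
    |Y j| ≤ lpNormK n k Y := by
  have hk0 : 0 < k := by linarith
  have h1 : |Y j| ^ k ≤ ∑ i ∈ Finset.range n, |Y i| ^ k := by
    apply Finset.single_le_sum (f := fun i => |Y i| ^ k)
    · intro i _
      exact Real.rpow_nonneg (abs_nonneg _) k
    · exact Finset.mem_range.mpr hj
  have h2 : (|Y j| ^ k) ^ (1/k) ≤ (∑ i ∈ Finset.range n, |Y i| ^ k) ^ (1/k) :=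
    Real.rpow_le_rpow (Real.rpow_nonneg (abs_nonneg _) k) h1 (by positivity)
  have h3 : (|Y j| ^ k) ^ (1/k) = |Y j| := by
    rw [← Real.rpow_mul (abs_nonneg _), mul_one_div, div_self (ne_of_gt hk0), Real.rpow_one]
  rw [← h3]
  exact h2

lemma lpNormK_le (n : ℕ) (k : ℝ) (hk : 1 ≤ k) (X : ℕ → ℝ) (M : ℝ) (hM : 0 ≤ M)
    (hX : ∀ j < n, |X j| ≤ M) : lpNormK n k X ≤ (n : ℝ) ^ (1/k) * M := by
  have hk0 : 0 < k := by linarith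
  have h1 : ∑ j ∈ Finset.range n, |X j| ^ k ≤ (n : ℝ) * M ^ k := by
    calc ∑ j ∈ Finset.range n, |X j| ^ k
        ≤ ∑ j ∈ Finset.range n, M ^ k := by
          apply Finset.sum_le_sum
          intro j hj
          exact Real.rpow_le_rpow (abs_nonneg _) (hX j (Finset.mem_range.mp hj)) (le_of_lt hk0)
      _ = (n : ℝ) * M ^ k := by rw [Finset.sum_const, Finset.card_range, nsmul_eq_mul]
  have h2 : lpNormK n k X ≤ ((n : ℝ) * M ^ k) ^ (1/k) := by
    unfold lpNormK
    exact Real.rpow_le_rpow (Finset.sum_nonneg fun j _ => Real.rpow_nonneg (abs_nonneg _) k)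
      h1 (by positivity)
  have h3 : ((n : ℝ) * M ^ k) ^ (1/k) = (n : ℝ) ^ (1/k) * M := by
    rw [Real.mul_rpow (Nat.cast_nonneg n) (Real.rpow_nonneg hM k),
        ← Real.rpow_mul hM, mul_one_div, div_self (ne_of_gt hk0), Real.rpow_one]
  rw [← h3]
  exact h2

/-- if `|x_j| ≤ M` for all `j`, `k ≥ 1`, and `Z` satisfies
`‖X − W⁻¹(Z)‖_k ≤ ‖X‖_k` (as any minimizer over vectors with at most `B` nonzero
entries does), then the synopsis coefficients themselves are bounded:
`|Z_i| ≤ 2·n^(1/k)·M` for every `i < n = 2^m`. -/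
theorem synopsis_coeff_bound (m : ℕ) (hm : 1 ≤ m) (X Z : ℕ → ℝ) (M k : ℝ)
    (hk : 1 ≤ k) (hX : ∀ j < 2 ^ m, |X j| ≤ M)
    (hZ : lpNormK (2 ^ m) k (fun j => X j - invW m Z j) ≤ lpNormK (2 ^ m) k X) :
    ∀ i < 2 ^ m, |Z i| ≤ 2 * ((2 ^ m : ℕ) : ℝ) ^ (1 / k) * M := by
  have hM : 0 ≤ M := le_trans (abs_nonneg _) (hX 0 (Nat.pow_pos (by norm_num)))
  have hn1 : (1:ℝ) ≤ ((2 ^ m : ℕ) : ℝ) ^ (1 / k) := by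
    apply Real.one_le_rpow
    · exact_mod_cast Nat.one_le_two_pow
    · positivity
  have hXn : lpNormK (2 ^ m) k X ≤ ((2 ^ m : ℕ) : ℝ) ^ (1/k) * M :=
    lpNormK_le _ k hk X M hM hX
  apply invW_coeff_bound m Z
  intro j hj
  have h1 : |X j - invW m Z j| ≤ lpNormK (2 ^ m) k (fun j => X j - invW m Z j) :=
    coord_le_lpNormK _ k hk (fun j => X j - invW m Z j) j hj
  have h2 : |X j| ≤ M := hX j hj
  have hM' : M ≤ ((2 ^ m : ℕ) : ℝ) ^ (1/k) * M := le_mul_of_one_le_left hM hn1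
  have : |invW m Z j| ≤ |X j - invW m Z j| + |X j| := by
    have := abs_sub (X j - invW m Z j) (X j)
    simp at this
    calc |invW m Z j| = |(X j - invW m Z j) - X j| := by rw [abs_sub_comm]; ring_nf
      _ ≤ |X j - invW m Z j| + |X j| := abs_sub _ _
  calc |invW m Z j| ≤ |X j - invW m Z j| + |X j| := this
    _ ≤ ((2 ^ m : ℕ) : ℝ) ^ (1/k) * M + ((2 ^ m : ℕ) : ℝ) ^ (1/k) * M := by
        have := le_trans h1 (le_trans hZ hXn)
        linarith
    _ = 2 * ((2 ^ m : ℕ) : ℝ) ^ (1/k) * M := by ring
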